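/- Let σ > 0 and let Z be a real Gaussian random variable with mean 0 and variance σ². Let h : ℝ → ℝ be strictly increasing and continuous and satisfy condition [A₊] with parameter b₊ > 0. Then the right tail of the distribution of Y = h(Z) is regularly varying at infinity with index −β₊, where β₊ = 1/(2 b₊ σ²): that is, for every λ > 0, P(h(Z) > λy) / P(h(Z) > y) → λ^{−β₊} as y → ∞. -/

import Mathlib

open MeasureTheory ProbabilityTheory Filter Real Set



lemma aux_integrableOn (a c : ℝ) (ha : 0 < a) :
    IntegrableOn (fun x => Real.exp (-a * x ^ 2)) (Ioi c) :=
  (integrable_exp_neg_mul_sq ha).integrableOn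

lemma aux_exp_deriv (a t : ℝ) :
    HasDerivAt (fun x => Real.exp (-a * x ^ 2)) (Real.exp (-a * t ^ 2) * (-a * (2 * t))) t := by
  have h1 : HasDerivAt (fun x : ℝ => -a * x ^ 2) (-a * (2 * t)) t := by
    simpa using (hasDerivAt_pow 2 t).const_mul (-a)
  exact h1.exp

lemma aux_tendsto_exp_mul (a : ℝ) (ha : 0 < a) :
    Tendsto (fun t => Real.exp (-a * t ^ 2)) atTop (nhds 0) := by
  apply Real.tendsto_exp_atBot.comp
  have h : Tendsto (fun t : ℝ => a * t ^ 2) atTop atTop :=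
    (tendsto_pow_atTop (two_ne_zero)).const_mul_atTop ha
  have h2 : Tendsto (fun t : ℝ => -(a * t ^ 2)) atTop atBot := tendsto_neg_atTop_atBot.comp h
  exact h2.congr fun t => by ring

lemma mills_upper (a c : ℝ) (ha : 0 < a) (hc : 0 < c) :
    ∫ x in Ioi c, Real.exp (-a * x ^ 2) ≤ Real.exp (-a * c ^ 2) * (2 * a * c)⁻¹ := by
  set φ : ℝ → ℝ := fun x => Real.exp (-a * x ^ 2) * (1 + (2 * a * x ^ 2)⁻¹) with hφ
  have hmono : ∀ x ∈ Ioi c, Real.exp (-a * x ^ 2) ≤ φ x := by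
    intro x hx
    have hx0 : 0 < x := hc.trans hx
    have h0 : (0:ℝ) < (2 * a * x ^ 2)⁻¹ := by positivity
    simp only [hφ]
    nlinarith [Real.exp_pos (-a * x ^ 2)]
  have hderiv : ∀ x ∈ Ici c, HasDerivAt
      (fun t => -((2 * a)⁻¹ * Real.exp (-a * t ^ 2) * t⁻¹)) (φ x) x := by
    intro x hx
    have hx0 : 0 < x := lt_of_lt_of_le hc hx
    have h1 : HasDerivAt (fun t => (2 * a)⁻¹ * Real.exp (-a * t ^ 2))
        ((2 * a)⁻¹ * (Real.exp (-a * x ^ 2) * (-a * (2 * x)))) x :=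
      (aux_exp_deriv a x).const_mul _
    have h2 : HasDerivAt (fun t : ℝ => t⁻¹) (-(x ^ 2)⁻¹) x := hasDerivAt_inv hx0.ne'
    have h3 := (h1.mul h2).neg
    refine h3.congr_deriv ?_
    rw [hφ]
    field_simp
    ring
  have hφint : IntegrableOn φ (Ioi c) := by
    refine Integrable.mono' ((aux_integrableOn a c ha).const_mul (1 + (2 * a * c ^ 2)⁻¹)) ?_ ?_
    · refine (ContinuousOn.mul (Continuous.continuousOn (by continuity)) ?_).aestronglyMeasurable
        measurableSet_Ioi
      refine ContinuousOn.add continuousOn_const (ContinuousOn.inv₀ (by fun_prop) ?_)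
      intro x hx
      have hx0 : 0 < x := hc.trans hx
      positivity
    · refine (ae_restrict_iff' measurableSet_Ioi).2 (ae_of_all _ fun x hx => ?_)
      have hx0 : 0 < x := hc.trans hx
      have h1 : (2 * a * x ^ 2)⁻¹ ≤ (2 * a * c ^ 2)⁻¹ := by
        apply inv_anti₀ (by positivity)
        have hcx : c < x := hx
        nlinarith [mul_pos (sub_pos.2 hcx) (add_pos hc hx0), mul_pos ha (mul_pos (sub_pos.2 hcx) (add_pos hc hx0))]
      have h2 : (0:ℝ) < 1 + (2 * a * x ^ 2)⁻¹ := by positivity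
      simp only [hφ, Real.norm_eq_abs]
      rw [abs_mul, abs_of_pos (Real.exp_pos _), abs_of_pos h2]
      have := (Real.exp_pos (-a * x ^ 2)).le
      nlinarith
  have hlim : Tendsto (fun t => -((2 * a)⁻¹ * Real.exp (-a * t ^ 2) * t⁻¹)) atTop (nhds 0) := by
    have := (((aux_tendsto_exp_mul a ha).const_mul ((2*a)⁻¹)).mul tendsto_inv_atTop_zero).neg
    simpa using this
  have key := integral_Ioi_of_hasDerivAt_of_tendsto' hderiv hφint hlim
  have hineq := setIntegral_mono_on (aux_integrableOn a c ha) hφint measurableSet_Ioi hmono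
  rw [key] at hineq
  calc ∫ x in Ioi c, Real.exp (-a * x ^ 2)
      ≤ 0 - -((2 * a)⁻¹ * Real.exp (-a * c ^ 2) * c⁻¹) := hineq
    _ = Real.exp (-a * c ^ 2) * (2 * a * c)⁻¹ := by field_simp; ring

lemma mills_lower (a c : ℝ) (ha : 0 < a) (hc : 0 < c) :
    Real.exp (-a * c ^ 2) * (2 * a * c)⁻¹ * (1 - (2 * a * c ^ 2)⁻¹)
      ≤ ∫ x in Ioi c, Real.exp (-a * x ^ 2) := by
  set ψ : ℝ → ℝ := fun x => Real.exp (-a * x ^ 2) * (1 - 3 * (4 * a ^ 2 * x ^ 4)⁻¹) with hψ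
  have hmono : ∀ x ∈ Ioi c, ψ x ≤ Real.exp (-a * x ^ 2) := by
    intro x hx
    have hx0 : 0 < x := hc.trans hx
    have h0 : (0:ℝ) < 3 * (4 * a ^ 2 * x ^ 4)⁻¹ := by positivity
    simp only [hψ]
    calc Real.exp (-a * x ^ 2) * (1 - 3 * (4 * a ^ 2 * x ^ 4)⁻¹)
        ≤ Real.exp (-a * x ^ 2) * 1 :=
          mul_le_mul_of_nonneg_left (by linarith) (Real.exp_pos _).le
      _ = Real.exp (-a * x ^ 2) := mul_one _
  have hderiv : ∀ x ∈ Ici c, HasDerivAt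
      (fun t => (4 * a ^ 2)⁻¹ * Real.exp (-a * t ^ 2) * (t ^ 3)⁻¹
        - (2 * a)⁻¹ * Real.exp (-a * t ^ 2) * t⁻¹) (ψ x) x := by
    intro x hx
    have hx0 : 0 < x := lt_of_lt_of_le hc hx
    have h1 : HasDerivAt (fun t => (4 * a ^ 2)⁻¹ * Real.exp (-a * t ^ 2))
        ((4 * a ^ 2)⁻¹ * (Real.exp (-a * x ^ 2) * (-a * (2 * x)))) x :=
      (aux_exp_deriv a x).const_mul _
    have h2 : HasDerivAt (fun t : ℝ => (t ^ 3)⁻¹) (-(3 * x ^ 2) / (x ^ 3) ^ 2) x := by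
      have := (hasDerivAt_pow 3 x).inv (pow_ne_zero 3 hx0.ne')
      exact this.congr_deriv (by norm_num)
    have h3 : HasDerivAt (fun t => (2 * a)⁻¹ * Real.exp (-a * t ^ 2))
        ((2 * a)⁻¹ * (Real.exp (-a * x ^ 2) * (-a * (2 * x)))) x :=
      (aux_exp_deriv a x).const_mul _
    have h4 : HasDerivAt (fun t : ℝ => t⁻¹) (-(x ^ 2)⁻¹) x := hasDerivAt_inv hx0.ne'
    have h5 := (h1.mul h2).sub (h3.mul h4)
    refine h5.congr_deriv ?_
    simp only [hψ]
    field_simp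
    ring
  have hψint : IntegrableOn ψ (Ioi c) := by
    refine Integrable.mono' ((aux_integrableOn a c ha).const_mul (1 + 3 * (4 * a ^ 2 * c ^ 4)⁻¹)) ?_ ?_
    · refine (ContinuousOn.mul (Continuous.continuousOn (by continuity)) ?_).aestronglyMeasurable
        measurableSet_Ioi
      refine ContinuousOn.sub continuousOn_const (ContinuousOn.mul continuousOn_const
        (ContinuousOn.inv₀ (by fun_prop) ?_))
      intro x hx
      have hx0 : 0 < x := hc.trans hx
      positivity
    · refine (ae_restrict_iff' measurableSet_Ioi).2 (ae_of_all _ fun x hx => ?_)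
      have hx0 : 0 < x := hc.trans hx
      have hcx : c < x := hx
      have h1 : (4 * a ^ 2 * x ^ 4)⁻¹ ≤ (4 * a ^ 2 * c ^ 4)⁻¹ := by
        apply inv_anti₀ (by positivity)
        have h2 : c ^ 4 ≤ x ^ 4 := pow_le_pow_left₀ hc.le hcx.le 4
        nlinarith [sq_nonneg a, mul_pos ha ha]
      have h3 : (0:ℝ) < 3 * (4 * a ^ 2 * x ^ 4)⁻¹ := by positivity
      simp only [hψ, Real.norm_eq_abs]
      rw [abs_mul, abs_of_pos (Real.exp_pos _)]
      have he := (Real.exp_pos (-a * x ^ 2)).le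
      have h4 : |1 - 3 * (4 * a ^ 2 * x ^ 4)⁻¹| ≤ 1 + 3 * (4 * a ^ 2 * c ^ 4)⁻¹ :=
        abs_le.mpr ⟨by linarith, by linarith⟩
      calc Real.exp (-a * x ^ 2) * |1 - 3 * (4 * a ^ 2 * x ^ 4)⁻¹|
          ≤ Real.exp (-a * x ^ 2) * (1 + 3 * (4 * a ^ 2 * c ^ 4)⁻¹) :=
            mul_le_mul_of_nonneg_left h4 he
        _ = (1 + 3 * (4 * a ^ 2 * c ^ 4)⁻¹) * Real.exp (-a * x ^ 2) := mul_comm _ _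
  have hlim : Tendsto (fun t => (4 * a ^ 2)⁻¹ * Real.exp (-a * t ^ 2) * (t ^ 3)⁻¹
      - (2 * a)⁻¹ * Real.exp (-a * t ^ 2) * t⁻¹) atTop (nhds 0) := by
    have l1 : Tendsto (fun t : ℝ => (t ^ 3)⁻¹) atTop (nhds 0) :=
      tendsto_inv_atTop_zero.comp (tendsto_pow_atTop (by norm_num : (3:ℕ) ≠ 0))
    have := ((((aux_tendsto_exp_mul a ha).const_mul ((4 * a ^ 2)⁻¹)).mul l1)).sub
      (((aux_tendsto_exp_mul a ha).const_mul ((2 * a)⁻¹)).mul tendsto_inv_atTop_zero)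
    simpa using this
  have key := integral_Ioi_of_hasDerivAt_of_tendsto' hderiv hψint hlim
  have hineq := setIntegral_mono_on hψint (aux_integrableOn a c ha) measurableSet_Ioi hmono
  rw [key] at hineq
  calc Real.exp (-a * c ^ 2) * (2 * a * c)⁻¹ * (1 - (2 * a * c ^ 2)⁻¹)
      = 0 - ((4 * a ^ 2)⁻¹ * Real.exp (-a * c ^ 2) * (c ^ 3)⁻¹
        - (2 * a)⁻¹ * Real.exp (-a * c ^ 2) * c⁻¹) := by field_simp; ring
    _ ≤ ∫ x in Ioi c, Real.exp (-a * x ^ 2) := hineq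

lemma aux_pos (a c : ℝ) (ha : 0 < a) : 0 < ∫ x in Ioi c, Real.exp (-a * x ^ 2) := by
  rw [setIntegral_pos_iff_support_of_nonneg_ae
    (ae_of_all _ fun x => (Real.exp_pos _).le) (aux_integrableOn a c ha)]
  have : Function.support (fun x => Real.exp (-a * x ^ 2)) = Set.univ := by
    ext x; simp [Function.mem_support, (Real.exp_pos _).ne']
  rw [this]
  simp


lemma tail_ratio_tendsto (a c : ℝ) (ha : 0 < a) (u v : ℝ → ℝ)
    (hu : Tendsto u atTop atTop) (hv : Tendsto v atTop atTop)
    (hdiff : Tendsto (fun y => (v y) ^ 2 - (u y) ^ 2) atTop (nhds c)) :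
    Tendsto (fun y => (∫ x in Ioi (v y), Real.exp (-a * x ^ 2))
        / (∫ x in Ioi (u y), Real.exp (-a * x ^ 2)))
      atTop (nhds (Real.exp (-a * c))) := by
  have hu2 : Tendsto (fun y => (u y) ^ 2) atTop atTop :=
    (tendsto_pow_atTop (two_ne_zero)).comp hu
  have hv2 : Tendsto (fun y => (v y) ^ 2) atTop atTop :=
    (tendsto_pow_atTop (two_ne_zero)).comp hv
  -- limit of the exponential factor
  have l_exp : Tendsto (fun y => Real.exp (-a * ((v y) ^ 2 - (u y) ^ 2))) atTop
      (nhds (Real.exp (-a * c))) :=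
    (Real.continuous_exp.continuousAt.tendsto).comp (hdiff.const_mul (-a))
  -- limit of u/v
  have l_uv : Tendsto (fun y => u y / v y) atTop (nhds 1) := by
    have h1 : Tendsto (fun y => ((v y) ^ 2 - (u y) ^ 2) / (v y) ^ 2) atTop (nhds 0) :=
      hdiff.div_atTop hv2
    have h2' : Tendsto (fun y => 1 - ((v y) ^ 2 - (u y) ^ 2) / (v y) ^ 2) atTop (nhds 1) := by
      simpa using tendsto_const_nhds.sub h1
    have h2 : Tendsto (fun y => (u y / v y) ^ 2) atTop (nhds 1) := by
      refine h2'.congr' ?_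
      filter_upwards [hv.eventually_gt_atTop 0] with y hy
      field_simp
      ring
    have h3 : Tendsto (fun y => Real.sqrt ((u y / v y) ^ 2)) atTop (nhds 1) := by
      have := (Real.continuous_sqrt.continuousAt.tendsto).comp h2
      rw [Real.sqrt_one] at this
      exact this
    refine h3.congr' ?_
    filter_upwards [hv.eventually_gt_atTop 0, hu.eventually_gt_atTop 0] with y hyv hyu
    exact Real.sqrt_sq (by positivity)
  have l_den : ∀ w : ℝ → ℝ, Tendsto w atTop atTop →
      Tendsto (fun y => 1 - (2 * a * (w y) ^ 2)⁻¹) atTop (nhds 1) := by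
    intro w hw
    have h1 : Tendsto (fun y => 2 * a * (w y) ^ 2) atTop atTop :=
      ((tendsto_pow_atTop (two_ne_zero)).comp hw).const_mul_atTop (by positivity)
    simpa using tendsto_const_nhds.sub h1.inv_tendsto_atTop
  have l_up : Tendsto (fun y => Real.exp (-a * ((v y) ^ 2 - (u y) ^ 2)) * (u y / v y)
      / (1 - (2 * a * (u y) ^ 2)⁻¹)) atTop (nhds (Real.exp (-a * c))) := by
    have := (l_exp.mul l_uv).div (l_den u hu) (one_ne_zero)
    rw [mul_one, div_one] at this
    exact this
  have l_lo : Tendsto (fun y => Real.exp (-a * ((v y) ^ 2 - (u y) ^ 2)) * (u y / v y)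
      * (1 - (2 * a * (v y) ^ 2)⁻¹)) atTop (nhds (Real.exp (-a * c))) := by
    have := (l_exp.mul l_uv).mul (l_den v hv)
    simpa using this
  refine tendsto_of_tendsto_of_tendsto_of_le_of_le' l_lo l_up ?_ ?_
  · -- lower bound eventually
    filter_upwards [hu.eventually_ge_atTop 1, hv.eventually_ge_atTop 1,
      hu2.eventually_ge_atTop ((2 * a)⁻¹ + 1), hv2.eventually_ge_atTop ((2 * a)⁻¹ + 1)]
      with y hs1 ht1 hs2 ht2
    set s := u y
    set t := v y
    have hs0 : 0 < s := lt_of_lt_of_le one_pos hs1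
    have ht0 : 0 < t := lt_of_lt_of_le one_pos ht1
    have h2a : (0:ℝ) < 2 * a := by positivity
    have has : 1 < 2 * a * s ^ 2 := by
      have h := mul_le_mul_of_nonneg_left hs2 h2a.le
      rw [mul_add, mul_inv_cancel₀ h2a.ne'] at h
      linarith
    have hat : 1 < 2 * a * t ^ 2 := by
      have h := mul_le_mul_of_nonneg_left ht2 h2a.le
      rw [mul_add, mul_inv_cancel₀ h2a.ne'] at h
      linarith
    have hL : (0:ℝ) < Real.exp (-a * s ^ 2) * (2 * a * s)⁻¹ * (1 - (2 * a * s ^ 2)⁻¹) := by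
      have : (2 * a * s ^ 2)⁻¹ < 1 := inv_lt_one_of_one_lt₀ has
      have h2 : (0:ℝ) < 1 - (2 * a * s ^ 2)⁻¹ := by linarith
      positivity
    have key : Real.exp (-a * t ^ 2) * (2 * a * t)⁻¹ * (1 - (2 * a * t ^ 2)⁻¹)
          / (Real.exp (-a * s ^ 2) * (2 * a * s)⁻¹)
        ≤ (∫ x in Ioi t, Real.exp (-a * x ^ 2)) / ∫ x in Ioi s, Real.exp (-a * x ^ 2) :=
      div_le_div₀ (le_of_lt (aux_pos a t ha)) (mills_lower a t ha ht0)
        (aux_pos a s ha) (mills_upper a s ha hs0)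
    refine le_trans (le_of_eq ?_) key
    have hE : Real.exp (-a * (t ^ 2 - s ^ 2)) = Real.exp (-a * t ^ 2) / Real.exp (-a * s ^ 2) := by
      rw [← Real.exp_sub]; ring_nf
    rw [hE]
    have hEs := Real.exp_ne_zero (-a * s ^ 2)
    have hEt := Real.exp_ne_zero (-a * t ^ 2)
    rw [eq_div_iff (by positivity : (0:ℝ) < Real.exp (-a * s ^ 2) * (2 * a * s)⁻¹).ne']
    field_simp
  · -- upper bound eventually
    filter_upwards [hu.eventually_ge_atTop 1, hv.eventually_ge_atTop 1,
      hu2.eventually_ge_atTop ((2 * a)⁻¹ + 1), hv2.eventually_ge_atTop ((2 * a)⁻¹ + 1)]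
      with y hs1 ht1 hs2 ht2
    set s := u y
    set t := v y
    have hs0 : 0 < s := lt_of_lt_of_le one_pos hs1
    have ht0 : 0 < t := lt_of_lt_of_le one_pos ht1
    have h2a : (0:ℝ) < 2 * a := by positivity
    have has : 1 < 2 * a * s ^ 2 := by
      have h := mul_le_mul_of_nonneg_left hs2 h2a.le
      rw [mul_add, mul_inv_cancel₀ h2a.ne'] at h
      linarith
    have hinv : (2 * a * s ^ 2)⁻¹ < 1 := inv_lt_one_of_one_lt₀ has
    have h2 : (0:ℝ) < 1 - (2 * a * s ^ 2)⁻¹ := by linarith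
    have hL : (0:ℝ) < Real.exp (-a * s ^ 2) * (2 * a * s)⁻¹ * (1 - (2 * a * s ^ 2)⁻¹) := by
      positivity
    have key : (∫ x in Ioi t, Real.exp (-a * x ^ 2)) / ∫ x in Ioi s, Real.exp (-a * x ^ 2)
        ≤ Real.exp (-a * t ^ 2) * (2 * a * t)⁻¹
          / (Real.exp (-a * s ^ 2) * (2 * a * s)⁻¹ * (1 - (2 * a * s ^ 2)⁻¹)) :=
      div_le_div₀ (by positivity) (mills_upper a t ha ht0) hL (mills_lower a s ha hs0)
    refine le_trans key (le_of_eq ?_)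
    have hE : Real.exp (-a * (t ^ 2 - s ^ 2)) = Real.exp (-a * t ^ 2) / Real.exp (-a * s ^ 2) := by
      rw [← Real.exp_sub]; ring_nf
    rw [hE]
    have hEs := Real.exp_ne_zero (-a * s ^ 2)
    have hEt := Real.exp_ne_zero (-a * t ^ 2)
    rw [div_mul_eq_div_div, div_eq_div_iff (by positivity) (by positivity)]
    field_simp

/-- If `Z ~ N(0, σ²)` and `h` is strictly increasing, continuous and
satisfies condition [A₊] with parameter `b > 0`, then the right tail of the distribution
of `h(Z)` is regularly varying at infinity with index `-β₊`, `β₊ = 1/(2bσ²)`. -/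
theorem transformed_gaussian_right_tail_regularly_varying
    {Ω : Type*} [MeasurableSpace Ω] (μ : Measure Ω) [IsProbabilityMeasure μ]
    (σ : ℝ) (hσ : 0 < σ)
    (Z : Ω → ℝ) (hZmeas : Measurable Z)
    (hZlaw : μ.map Z = gaussianReal 0 ⟨σ ^ 2, sq_nonneg σ⟩)
    (h : ℝ → ℝ) (hmono : StrictMono h) (hcont : Continuous h)
    (b : ℝ) (hb : 0 < b)
    (f r : ℝ → ℝ)
    (hf : Differentiable ℝ f)
    (hf' : Tendsto (fun x => deriv f x / x) atTop (nhds 0))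
    (hr : Tendsto r atTop (nhds 0))
    (hrep : ∀ᶠ x in atTop, h x = Real.exp (b * x ^ 2 + f x + r x)) :
    ∀ l : ℝ, 0 < l →
      Tendsto
        (fun y => (μ {ω | h (Z ω) > l * y}).toReal / (μ {ω | h (Z ω) > y}).toReal)
        atTop (nhds (l ^ (-(1 / (2 * b * σ ^ 2))))) := by
  have hσ2 : (0:ℝ) < σ ^ 2 := by positivity
  set V : NNReal := ⟨σ ^ 2, sq_nonneg σ⟩ with hV
  have hVne : V ≠ 0 := by
    intro hc
    apply hσ2.ne'
    have := congrArg NNReal.toReal hc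
    exact this
  set a : ℝ := (2 * σ ^ 2)⁻¹ with haa
  clear_value V
  have ha : 0 < a := by positivity
  clear_value a
  have hmeaset : ∀ t : ℝ, MeasurableSet {x : ℝ | h x > t} := fun t =>
    measurableSet_lt measurable_const hcont.measurable
  have hμν : ∀ t : ℝ, μ {ω | h (Z ω) > t} = gaussianReal 0 V {x | h x > t} := by
    intro t
    calc μ {ω | h (Z ω) > t} = μ.map Z {x | h x > t} :=
          (Measure.map_apply hZmeas (hmeaset t)).symm
      _ = gaussianReal 0 V {x | h x > t} := by rw [hZlaw]
  -- mean value bound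
  have mvt : ∀ ε : ℝ, 0 < ε → ∃ S : ℝ, 1 ≤ S ∧ ∀ p q : ℝ, S ≤ p → p ≤ q →
      |f q - f p| ≤ ε * q * (q - p) := by
    intro ε hε
    have hev : ∀ᶠ x in atTop, |deriv f x / x| < ε := by
      have := Metric.tendsto_nhds.mp hf' ε hε
      simp only [Real.dist_eq, sub_zero] at this
      exact this
    obtain ⟨S₀, hS₀⟩ := eventually_atTop.mp hev
    refine ⟨max S₀ 1, le_max_right _ _, ?_⟩
    intro p q hp hpq
    rcases eq_or_lt_of_le hpq with rfl | hlt
    · simp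
    have hp1 : 1 ≤ p := le_trans (le_max_right S₀ 1) hp
    have hp0 : 0 < p := lt_of_lt_of_le one_pos hp1
    obtain ⟨ξ, hξ, hslope⟩ := exists_deriv_eq_slope f hlt hf.continuous.continuousOn
      (hf.differentiableOn)
    have hξ0 : 0 < ξ := hp0.trans hξ.1
    have hξS : S₀ ≤ ξ := le_trans (le_trans (le_max_left S₀ 1) hp) hξ.1.le
    have hd : |deriv f ξ| ≤ ε * ξ := by
      have h1 := (hS₀ ξ hξS).le
      rw [abs_div, abs_of_pos hξ0, div_le_iff₀ hξ0] at h1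
      exact h1
    have heqq : f q - f p = deriv f ξ * (q - p) := by
      rw [hslope, div_mul_cancel₀ _ (sub_ne_zero.2 hlt.ne')]
    rw [heqq, abs_mul, abs_of_pos (sub_pos.2 hlt)]
    have hξq : ξ ≤ q := hξ.2.le
    have h2 : |deriv f ξ| * (q - p) ≤ (ε * ξ) * (q - p) :=
      mul_le_mul_of_nonneg_right hd (by linarith)
    refine h2.trans ?_
    have : ε * ξ ≤ ε * q := mul_le_mul_of_nonneg_left hξq hε.le
    exact mul_le_mul_of_nonneg_right this (by linarith)
  -- h tends to infinity
  have hhtop : Tendsto h atTop atTop := by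
    obtain ⟨S, hS1, hSb⟩ := mvt (b/2) (by positivity)
    have hrev : ∀ᶠ x in atTop, |r x| < 1 := by
      have := Metric.tendsto_nhds.mp hr 1 one_pos
      simp only [Real.dist_eq, sub_zero] at this
      exact this
    have hlow : ∀ᶠ x in atTop, (b/2) * x ^ 2 + (f S - 1) ≤ b * x ^ 2 + f x + r x := by
      filter_upwards [eventually_ge_atTop S, hrev] with x hx hrx
      have hW := hSb S x le_rfl hx
      have h1 : f S - f x ≤ (b/2) * x * (x - S) := by
        have := le_abs_self (f S - f x)
        rw [abs_sub_comm] at this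
        linarith [hW]
      have hS0 : 0 < S := lt_of_lt_of_le one_pos hS1
      have hx0 : 0 < x := lt_of_lt_of_le hS0 hx
      have h2 : (b/2) * x * (x - S) ≤ (b/2) * x ^ 2 := by
        nlinarith [mul_nonneg (mul_nonneg hb.le hx0.le) hS0.le]
      have h3 : -1 ≤ r x := (abs_le.mp hrx.le).1
      linarith
    have l2 : Tendsto (fun x : ℝ => (b/2) * x ^ 2 + (f S - 1)) atTop atTop :=
      tendsto_atTop_add_const_right _ _
        ((tendsto_pow_atTop two_ne_zero).const_mul_atTop (by positivity))
    have l3 : Tendsto (fun x => b * x ^ 2 + f x + r x) atTop atTop :=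
      tendsto_atTop_mono' atTop hlow l2
    have l4 := Real.tendsto_exp_atTop.comp l3
    exact l4.congr' (hrep.mono fun x hx => hx.symm)
  -- the inverse function g
  have hexists : ∀ y : ℝ, h 0 < y → ∃ x, 0 ≤ x ∧ h x = y := by
    intro y hy
    obtain ⟨X, hX⟩ := (hhtop.eventually_gt_atTop y).exists
    have h0X : (0:ℝ) ≤ X := (hmono.lt_iff_lt.mp (hy.trans hX)).le
    obtain ⟨x, hx, hhx⟩ := intermediate_value_Icc h0X hcont.continuousOn ⟨hy.le, hX.le⟩
    exact ⟨x, hx.1, hhx⟩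
  choose! g hg0 hgh using hexists
  have hgtop : Tendsto g atTop atTop := by
    refine tendsto_atTop.mpr fun M => ?_
    filter_upwards [eventually_gt_atTop (h (max M 0)), eventually_gt_atTop (h 0)] with y h1 h2
    have h3 : h (max M 0) < h (g y) := by rw [hgh y h2]; exact h1
    exact le_trans (le_max_left M 0) (hmono.lt_iff_lt.mp h3).le
  have hset : ∀ y : ℝ, h 0 < y → {x : ℝ | h x > y} = Ioi (g y) := by
    intro y hy
    ext x
    simp only [mem_setOf_eq, mem_Ioi, gt_iff_lt]
    constructor
    · intro hh
      by_contra hxle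
      push_neg at hxle
      have h2 := hmono.le_iff_le.mpr hxle
      rw [hgh y hy] at h2
      linarith
    · intro hh
      have h2 := hmono hh
      rwa [hgh y hy] at h2
  -- tail formula
  have hkne : (Real.sqrt (2 * π * σ ^ 2))⁻¹ ≠ 0 := by positivity
  have htail : ∀ᶠ y in atTop, (μ {ω | h (Z ω) > y}).toReal
      = (Real.sqrt (2 * π * σ ^ 2))⁻¹ * ∫ x in Ioi (g y), Real.exp (-a * x ^ 2) := by
    filter_upwards [eventually_gt_atTop (h 0)] with y hy
    have hpdf : ∀ x : ℝ, gaussianPDFReal 0 V x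
        = (Real.sqrt (2 * π * σ ^ 2))⁻¹ * Real.exp (-a * x ^ 2) := by
      intro x
      have hVcoe : (V : ℝ) = σ ^ 2 := by rw [hV]; rfl
      simp only [gaussianPDFReal, hVcoe, sub_zero]
      congr 1
      rw [haa]
      field_simp
    rw [hμν, hset y hy, gaussianReal_apply_eq_integral 0 hVne,
      ENNReal.toReal_ofReal (integral_nonneg fun x => gaussianPDFReal_nonneg 0 V x)]
    simp_rw [hpdf]
    rw [MeasureTheory.integral_const_mul]
  -- reduction to l ≥ 1
  suffices H : ∀ l : ℝ, 1 ≤ l → Tendsto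
      (fun y => (μ {ω | h (Z ω) > l * y}).toReal / (μ {ω | h (Z ω) > y}).toReal)
      atTop (nhds (l ^ (-(1 / (2 * b * σ ^ 2))))) by
    intro l hl0
    rcases le_or_gt 1 l with h1 | h1
    · exact H l h1
    · have hl' : 1 ≤ 1 / l := one_le_one_div hl0 h1.le
      have H2 := H (1 / l) hl'
      have hly : Tendsto (fun y : ℝ => l * y) atTop atTop :=
        Tendsto.const_mul_atTop hl0 tendsto_id
      have Hc := H2.comp hly
      have Hinv := Hc.inv₀ (ne_of_gt (Real.rpow_pos_of_pos (by positivity) _))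
      have hlim : (((1:ℝ) / l) ^ (-(1 / (2 * b * σ ^ 2))))⁻¹ = l ^ (-(1 / (2 * b * σ ^ 2))) := by
        rw [one_div, Real.inv_rpow hl0.le, inv_inv]
      rw [hlim] at Hinv
      refine Hinv.congr fun y => ?_
      simp only [Function.comp]
      rw [inv_div]
      congr 2
      field_simp
  intro l hl
  have hl0 : 0 < l := lt_of_lt_of_le one_pos hl
  obtain ⟨X₀, hX₀⟩ := eventually_atTop.mp hrep
  have heq : ∀ᶠ y in atTop, b * (g y) ^ 2 + f (g y) + r (g y) = Real.log y := by
    filter_upwards [eventually_gt_atTop (h 0), hgtop.eventually_ge_atTop X₀] with y hy hgy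
    have h1 : h (g y) = y := hgh y hy
    rw [hX₀ _ hgy] at h1
    have h2 : Real.log y = b * (g y) ^ 2 + f (g y) + r (g y) := by
      conv_lhs => rw [← h1]
      exact Real.log_exp _
    exact h2.symm
  have hly : Tendsto (fun y : ℝ => l * y) atTop atTop :=
    Tendsto.const_mul_atTop hl0 tendsto_id
  have heq2 : ∀ᶠ y in atTop, b * (g (l * y)) ^ 2 + f (g (l * y)) + r (g (l * y))
      = Real.log l + Real.log y := by
    filter_upwards [hly.eventually heq, eventually_gt_atTop 0] with y hy hy0
    rw [hy, Real.log_mul hl0.ne' hy0.ne']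
  have hvtop : Tendsto (fun y => g (l * y)) atTop atTop := hgtop.comp hly
  have hmonog : ∀ᶠ y in atTop, g y ≤ g (l * y) := by
    filter_upwards [eventually_gt_atTop (h 0), eventually_ge_atTop 0] with y hy hy0
    have hyl : y ≤ l * y := le_mul_of_one_le_left hy0 hl
    have h2 : h 0 < l * y := lt_of_lt_of_le hy hyl
    have h3 : h (g y) ≤ h (g (l * y)) := by rw [hgh y hy, hgh _ h2]; exact hyl
    exact hmono.le_iff_le.mp h3
  have hbu2 : Tendsto (fun y => b * (g y) ^ 2) atTop atTop :=
    Tendsto.const_mul_atTop hb ((tendsto_pow_atTop two_ne_zero).comp hgtop)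
  have hlog : 0 ≤ Real.log l := Real.log_nonneg hl
  -- f difference tends to 0
  have hfd : Tendsto (fun y => f (g y) - f (g (l * y))) atTop (nhds 0) := by
    rw [Metric.tendsto_nhds]
    intro δ hδ
    set C : ℝ := 2 * (Real.log l + 1) / b with hC
    have hC0 : (0:ℝ) < C + 1 := by positivity
    set ε : ℝ := min (b / 2) (δ / (C + 1)) with hε
    have hε0 : 0 < ε := lt_min (by positivity) (by positivity)
    clear_value C
    obtain ⟨S, hS1, hSb⟩ := mvt ε hε0
    have hεb : ε ≤ b / 2 := min_le_left _ _
    have hεδ : ε * (C + 1) ≤ δ := by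
      rw [← le_div_iff₀ hC0]
      exact min_le_right _ _
    clear_value ε
    have hrsmall : ∀ᶠ y in atTop, |r (g y)| ≤ 1 / 2 := by
      have := Metric.tendsto_nhds.mp (hr.comp hgtop) (1 / 2) (by norm_num)
      filter_upwards [this] with y hy
      rw [Real.dist_eq, sub_zero] at hy
      exact hy.le
    have hrsmall2 : ∀ᶠ y in atTop, |r (g (l * y))| ≤ 1 / 2 := by
      have := Metric.tendsto_nhds.mp (hr.comp hvtop) (1 / 2) (by norm_num)
      filter_upwards [this] with y hy
      rw [Real.dist_eq, sub_zero] at hy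
      exact hy.le
    filter_upwards [heq, heq2, hgtop.eventually_ge_atTop S, hgtop.eventually_ge_atTop 1,
      hbu2.eventually_ge_atTop (Real.log l + 1), hrsmall, hrsmall2, hmonog]
      with y E1 E2 hsS hs1 hbs2 hr1 hr2 hst
    set s := g y with hs
    set t := g (l * y) with ht
    clear_value s t
    have hs0 : 0 < s := lt_of_lt_of_le one_pos hs1
    have ht1 : 1 ≤ t := le_trans hs1 hst
    have hW : |f t - f s| ≤ ε * t * (t - s) := hSb s t hsS hst
    have hsub : b * (t ^ 2 - s ^ 2) = Real.log l + (f s - f t) + (r s - r t) := by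
      linarith
    have hd0 : 0 ≤ t - s := by linarith
    have h5 : b * (t - s) * (t + s) ≤ Real.log l + 1 + ε * t * (t - s) := by
      have habs1 : f s - f t ≤ |f t - f s| := by
        rw [abs_sub_comm]; exact le_abs_self _
      have habs2 : r s - r t ≤ 1 := by
        have := abs_le.mp hr1
        have := abs_le.mp hr2
        linarith [(abs_le.mp hr1).2, (abs_le.mp hr2).1]
      nlinarith
    have h6 : b * s ≤ b * (t + s) - ε * t := by
      have e1 : b * (t + s) - ε * t - b * s = (b - ε) * t := by ring
      have e2 : (0:ℝ) ≤ (b - ε) * t :=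
        mul_nonneg (by linarith) (by linarith)
      linarith
    have hd : (t - s) * (b * s) ≤ Real.log l + 1 := by
      have h7 := mul_le_mul_of_nonneg_left h6 hd0
      have h8 : (t - s) * (b * (t + s) - ε * t) = b * (t - s) * (t + s) - ε * t * (t - s) := by
        ring
      rw [h8] at h7
      linarith
    have hdb : t - s ≤ (Real.log l + 1) / (b * s) := (le_div_iff₀ (by positivity)).mpr hd
    have ht2s : t ≤ 2 * s := by
      have h7 : (Real.log l + 1) / (b * s) ≤ s := by
        rw [div_le_iff₀ (by positivity)]
        have e3 : s * (b * s) = b * s ^ 2 := by ring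
        linarith [e3]
      linarith
    have hWf : |f t - f s| ≤ ε * C := by
      calc |f t - f s| ≤ ε * t * (t - s) := hW
        _ ≤ ε * (2 * s) * ((Real.log l + 1) / (b * s)) := by
            have a1 : ε * t ≤ ε * (2 * s) := mul_le_mul_of_nonneg_left ht2s hε0.le
            exact mul_le_mul a1 hdb hd0 (by positivity)
        _ = ε * C := by
            rw [hC]; field_simp
    rw [Real.dist_eq, sub_zero, abs_sub_comm]
    have hfin : ε * C < ε * (C + 1) := mul_lt_mul_of_pos_left (lt_add_one C) hε0
    linarith
  -- limit of squares difference
  have hdiff : Tendsto (fun y => (g (l * y)) ^ 2 - (g y) ^ 2) atTop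
      (nhds (Real.log l / b)) := by
    have base : Tendsto
        (fun y => (Real.log l + (f (g y) - f (g (l * y))) + (r (g y) - r (g (l * y)))) / b)
        atTop (nhds ((Real.log l + 0 + (0 - 0)) / b)) :=
      ((tendsto_const_nhds.add hfd).add ((hr.comp hgtop).sub (hr.comp hvtop))).div_const b
    have base' : Tendsto
        (fun y => (Real.log l + (f (g y) - f (g (l * y))) + (r (g y) - r (g (l * y)))) / b)
        atTop (nhds (Real.log l / b)) := by
      simpa using base
    refine base'.congr' ?_
    filter_upwards [heq, heq2] with y h1 h2
    have h3 : b * ((g (l * y)) ^ 2 - (g y) ^ 2)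
        = Real.log l + (f (g y) - f (g (l * y))) + (r (g y) - r (g (l * y))) := by
      linarith
    rw [← h3, mul_comm, mul_div_assoc, div_self hb.ne', mul_one]
  have hmain := tail_ratio_tendsto a (Real.log l / b) ha g (fun y => g (l * y)) hgtop hvtop hdiff
  have hval : Real.exp (-a * (Real.log l / b)) = l ^ (-(1 / (2 * b * σ ^ 2))) := by
    rw [Real.rpow_def_of_pos hl0]
    congr 1
    rw [haa]
    have e1 : (1:ℝ) / (2 * b * σ ^ 2) = (2 * σ ^ 2)⁻¹ / b := by
      have e2 : (2 * b * σ ^ 2) = (2 * σ ^ 2) * b := by ring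
      rw [one_div, e2, mul_inv, div_eq_mul_inv]
    rw [e1]
    ring
  rw [← hval]
  refine hmain.congr' ?_
  filter_upwards [htail, hly.eventually htail] with y h1 h2
  rw [h1, h2, mul_div_mul_left _ _ hkne]
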